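/- Let P be an antichain of consecutive patterns containing exactly one pattern of each length l ≥ 4 and no patterns of any other length, and let α > 0 satisfy e^α − 2α − α²/2 − α³/6 = 0. Then for every n ≥ 0 the number of permutations of length n avoiding all patterns in P satisfies a^P_n ≥ α^{−n} · n!; in particular, for every n there exists at least one permutation of length n avoiding P, regardless of the actual choice of the patterns in P. -/

import Mathlib

/-- Standardization of a list of (distinct) natural numbers: entry `x` is replaced
by the number of entries of the list that are smaller than `x`.  For a list with
distinct entries this is the unique order-isomorphic permutation of `{0,…,n-1}`. -/
def std (l : List ℕ) : List ℕ := l.map (fun x => (l.filter (· < x)).length)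

/-- `l` is (the list of values of) a permutation of `{0,…,n-1}` where `n = l.length`. -/
def IsPermList (l : List ℕ) : Prop := l.Perm (List.range l.length)

/-- The pattern `τ` occurs in `σ` as a consecutive pattern at (0-indexed) position `i`:
the factor of `σ` of length `τ.length` starting at position `i` is order-isomorphic to `τ`. -/
def OccursAt (τ σ : List ℕ) (i : ℕ) : Prop :=
  i + τ.length ≤ σ.length ∧ std ((σ.drop i).take τ.length) = τ

/-- `τ` occurs somewhere in `σ` as a consecutive pattern. -/
def Occurs (τ σ : List ℕ) : Prop := ∃ i, OccursAt τ σ i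

/-- `σ` avoids every pattern of the set `P`. -/
def AvoidsAll (P : Set (List ℕ)) (σ : List ℕ) : Prop := ∀ τ ∈ P, ¬ Occurs τ σ

/-- The number of permutations of length `n` avoiding all the patterns of `P`
as consecutive patterns. -/
noncomputable def avoidCount (P : Set (List ℕ)) (n : ℕ) : ℕ :=
  Nat.card {σ : List ℕ // σ.length = n ∧ IsPermList σ ∧ AvoidsAll P σ}

/-- `P` is an antichain of consecutive patterns: every element is a permutation of
length at least 2, and no pattern of `P` occurs in a different pattern of `P`. -/
def PatternAntichain (P : Set (List ℕ)) : Prop :=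
  (∀ τ ∈ P, IsPermList τ ∧ 2 ≤ τ.length) ∧
    ∀ τ₁ ∈ P, ∀ τ₂ ∈ P, τ₁ ≠ τ₂ → ¬ Occurs τ₁ τ₂

/-- `IsChainT P q σ t`: the permutation (list) `σ` is a `q`-chain with respect to the
set of forbidden patterns `P`, with tail the terminal segment of `σ` of length `t`.
The empty permutation is the unique 0-chain (its own tail), the one-element
permutation is the unique 1-chain (its own tail), and a `(q+1)`-chain is a
concatenation `σ' ++ τ` (with `τ` nonempty) such that the standardization of `σ'` is a
`q`-chain with tail `τ'` (its last `t'` entries), and the standardization of `τ' ++ τ`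
contains exactly one occurrence of a pattern from `P`, this occurrence being a
terminal segment; the tail of the `(q+1)`-chain is `τ`. -/
inductive IsChainT (P : Set (List ℕ)) : ℕ → List ℕ → ℕ → Prop
  | zero : IsChainT P 0 [] 0
  | one : IsChainT P 1 [0] 1
  | succ (q : ℕ) (σ' τ : List ℕ) (t' : ℕ)
      (hτ : τ ≠ [])
      (hperm : IsPermList (σ' ++ τ))
      (hchain : IsChainT P q (std σ') t')
      (huniq : ∃! x : ℕ × List ℕ,
        x.2 ∈ P ∧ OccursAt x.2 (std (σ'.drop (σ'.length - t') ++ τ)) x.1)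
      (hterm : ∀ i : ℕ, ∀ ρ ∈ P,
        OccursAt ρ (std (σ'.drop (σ'.length - t') ++ τ)) i → i + ρ.length = t' + τ.length) :
      IsChainT P (q + 1) (σ' ++ τ) τ.length

/-- `σ` is a `q`-chain with respect to `P` (for some tail). -/
def IsPatChain (P : Set (List ℕ)) (q : ℕ) (σ : List ℕ) : Prop := ∃ t, IsChainT P q σ t

/-- `chainCount P n q` is the number of `q`-chains of length `n` with respect to `P`. -/
noncomputable def chainCount (P : Set (List ℕ)) (n q : ℕ) : ℕ :=
  Nat.card {σ : List ℕ // σ.length = n ∧ IsPatChain P q σ}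

/-- The number of `q`-chains of length `n` whose first entry is `p`
(entries counted `1,…,n`, while lists are `0`-indexed permutations of `{0,…,n-1}`). -/
noncomputable def chainCountFst (P : Set (List ℕ)) (n q p : ℕ) : ℕ :=
  Nat.card {σ : List ℕ // σ.length = n ∧ IsPatChain P q σ ∧ σ.getD 0 0 + 1 = p}

/-- The number of `q`-chains of length `n` whose first entry is `p` and second entry is `r`
(entries counted `1,…,n`). -/
noncomputable def chainCountFstSnd (P : Set (List ℕ)) (n q p r : ℕ) : ℕ :=
  Nat.card {σ : List ℕ //
    σ.length = n ∧ IsPatChain P q σ ∧ σ.getD 0 0 + 1 = p ∧ σ.getD 1 0 + 1 = r}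

/-- A pattern `τ` has no self-overlaps if every permutation of length at most
`2 * τ.length - 2` contains at most one occurrence of `τ`. -/
def NonSelfOverlapping (τ : List ℕ) : Prop :=
  ∀ σ : List ℕ, IsPermList σ → σ.length ≤ 2 * τ.length - 2 →
    ∀ i j : ℕ, OccursAt τ σ i → OccursAt τ σ j → i = j

/-- The number of occurrences of `τ` in `σ` as a consecutive pattern. -/
noncomputable def occCount (τ σ : List ℕ) : ℕ := Nat.card {i : ℕ // OccursAt τ σ i}

/-- The `k`-fold ordered sum `λ (λ+m) (λ+2m) … (λ+(k-1)m)` of a pattern `λ` of length `m`. -/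
def ordSum (k m : ℕ) (l : List ℕ) : List ℕ :=
  ((List.range k).map (fun j => l.map (fun x => x + j * m))).flatten

/-- The length of the maximal initial segment of `l` that is an increasing run. -/
noncomputable def initRise (l : List ℕ) : ℕ :=
  sSup {j | j ≤ l.length ∧ List.Pairwise (· < ·) (l.take j)}

/-- The length of the maximal terminal segment of `l` that is an increasing run. -/
noncomputable def termRise (l : List ℕ) : ℕ :=
  sSup {j | j ≤ l.length ∧ List.Pairwise (· < ·) (l.drop (l.length - j))}

section AuxProof

lemma length_filter_lt_of_mem {l : List ℕ} {p : ℕ → Bool} {x : ℕ} (hx : x ∈ l)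
    (hpx : p x = false) : (l.filter p).length < l.length := by
  induction l with
  | nil => simp at hx
  | cons a t ih =>
    rcases List.mem_cons.1 hx with rfl | hx
    · simp only [List.filter_cons, hpx]
      exact Nat.lt_succ_of_le (List.length_filter_le _ _)
    · by_cases hpa : p a = true
      · simpa [List.filter_cons, hpa] using Nat.succ_lt_succ (ih hx)
      · simp only [List.filter_cons, Bool.not_eq_true] at hpa ⊢
        rw [hpa]
        simp only [List.length_cons]
        exact Nat.lt_succ_of_lt (ih hx)

lemma rank_lt_rank {u : List ℕ} {x y : ℕ} (hx : x ∈ u) (hxy : x < y) :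
    (u.filter (· < x)).length < (u.filter (· < y)).length := by
  have h1 : u.filter (· < x) = (u.filter (· < y)).filter (· < x) := by
    rw [List.filter_filter]
    apply List.filter_congr
    intro a _
    by_cases h : a < x
    · simp [h, lt_trans h hxy]
    · simp [h]
  rw [h1]
  exact length_filter_lt_of_mem (List.mem_filter.2 ⟨hx, by simpa using hxy⟩)
    (by simp)

lemma rank_injOn {u : List ℕ} {x y : ℕ} (hx : x ∈ u) (hy : y ∈ u)
    (h : (u.filter (· < x)).length = (u.filter (· < y)).length) : x = y := by
  rcases lt_trichotomy x y with hlt | rfl | hlt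
  · exact absurd h (Nat.ne_of_lt (rank_lt_rank hx hlt))
  · rfl
  · exact absurd h.symm (Nat.ne_of_lt (rank_lt_rank hy hlt))

lemma std_length (l : List ℕ) : (std l).length = l.length := by simp [std]

lemma std_map (f : ℕ → ℕ) (l : List ℕ)
    (h : ∀ x ∈ l, ∀ y ∈ l, x < y → f x < f y) : std (l.map f) = std l := by
  have key : ∀ x ∈ l, ∀ y ∈ l, (f y < f x ↔ y < x) := by
    intro x hx y hy
    constructor
    · intro hf
      by_contra hyx
      rcases Nat.lt_or_ge x y with hlt | hge
      · exact absurd hf (Nat.not_lt.2 (Nat.le_of_lt (h x hx y hy hlt)))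
      · exact hyx (lt_of_le_of_ne hge (fun e => by subst e; exact Nat.lt_irrefl _ hf))
    · exact h y hy x hx
  unfold std
  rw [List.map_map]
  apply List.map_congr_left
  intro x hx
  simp only [Function.comp]
  rw [← List.countP_eq_length_filter, ← List.countP_eq_length_filter, List.countP_map]
  apply List.countP_congr
  intro a ha
  simp only [Function.comp, decide_eq_true_eq]
  exact ⟨fun hh => by simpa using (key x hx a ha).1 (by simpa using hh),
    fun hh => by simpa using h a ha x hx (by simpa using hh)⟩

lemma countP_range_lt (x n : ℕ) :
    ((List.range n).filter (fun a => a < x)).length = min x n := by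
  induction n with
  | zero => simp
  | succ n ih =>
    rw [List.range_succ, List.filter_append, List.length_append, ih]
    by_cases h : n < x
    · simp [h]; omega
    · simp [h]; omega

lemma IsPermList.nodup {l : List ℕ} (h : IsPermList l) : l.Nodup :=
  h.nodup_iff.2 List.nodup_range

lemma IsPermList.mem_lt {l : List ℕ} (h : IsPermList l) {x : ℕ} (hx : x ∈ l) :
    x < l.length := by
  have := h.mem_iff.1 hx
  simpa using this

lemma std_of_isPermList {l : List ℕ} (h : IsPermList l) : std l = l := by
  unfold std
  have : ∀ x ∈ l, ((l.filter (· < x)).length) = x := by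
    intro x hx
    have hp : (l.filter (fun a => a < x)).length
        = ((List.range l.length).filter (fun a => a < x)).length :=
      (h.filter _).length_eq
    rw [show ((· < x) : ℕ → Bool) = (fun a => decide (a < x)) from rfl]
    rw [hp, countP_range_lt]
    exact min_eq_left (le_of_lt (h.mem_lt hx))
  calc l.map (fun x => (l.filter (· < x)).length) = l.map id :=
        List.map_congr_left (fun a ha => this a ha)
    _ = l := List.map_id l

lemma isPermList_of_nodup_lt {l : List ℕ} (hn : l.Nodup)
    (hlt : ∀ x ∈ l, x < l.length) : IsPermList l := by
  have hsub : l ⊆ List.range l.length := fun x hx => List.mem_range.2 (hlt x hx)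
  have := hn.subperm hsub
  exact this.perm_of_length_le (by simp)

lemma std_isPermList {l : List ℕ} (hn : l.Nodup) : IsPermList (std l) := by
  apply isPermList_of_nodup_lt
  · exact hn.map_on (fun x hx y hy => rank_injOn hx hy)
  · intro x hx
    rw [std_length]
    unfold std at hx
    rcases List.mem_map.1 hx with ⟨a, ha, rfl⟩
    exact length_filter_lt_of_mem ha (by simp)

lemma eq_of_std_eq_of_perm {l₁ l₂ : List ℕ} (hp : l₁.Perm l₂)
    (hstd : std l₁ = std l₂) : l₁ = l₂ := by
  have hlen : l₁.length = l₂.length := hp.length_eq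
  apply List.ext_getElem hlen
  intro i h1 h2
  have e1 : (std l₁)[i]'(by rwa [std_length]) = (l₁.filter (· < l₁[i])).length := by
    simp [std]
  have e2 : (std l₂)[i]'(by rwa [std_length]) = (l₂.filter (· < l₂[i])).length := by
    simp [std]
  have : (l₁.filter (· < l₁[i])).length = (l₂.filter (· < l₂[i])).length := by
    rw [← e1, ← e2]
    congr 1
  have hcnt : (l₂.filter (· < l₁[i])).length = (l₂.filter (· < l₂[i])).length := by
    rw [← this, ← List.countP_eq_length_filter, ← List.countP_eq_length_filter]
    exact (hp.countP_eq _).symm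
  exact rank_injOn (hp.mem_iff.1 (l₁.getElem_mem h1)) (l₂.getElem_mem h2) hcnt

-- std of a factor of std
lemma std_factor (u : List ℕ) (i L : ℕ) :
    std (((std u).drop i).take L) = std ((u.drop i).take L) := by
  unfold std
  rw [← List.map_drop, ← List.map_take]
  have := std_map (f := fun x => (u.filter (· < x)).length) (l := (u.drop i).take L)
    (fun x hx y hy hxy =>
      rank_lt_rank (List.mem_of_mem_drop (List.mem_of_mem_take hx)) hxy)
  unfold std at this
  rw [this]

lemma take_drop_take {σ : List ℕ} {i L m : ℕ} (h : i + L ≤ m) :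
    ((σ.take m).drop i).take L = (σ.drop i).take L := by
  rw [List.drop_take, List.take_take, min_eq_left (by omega)]

lemma occursAt_in_take {σ τ : List ℕ} {m i : ℕ} (hm : m ≤ σ.length)
    (hiL : i + τ.length ≤ m) (h : OccursAt τ σ i) : OccursAt τ (std (σ.take m)) i := by
  refine ⟨?_, ?_⟩
  · rw [std_length, List.length_take]; omega
  · rw [std_factor, take_drop_take hiL]; exact h.2

lemma occursAt_of_take {σ τ : List ℕ} {m i : ℕ} (hm : m ≤ σ.length)
    (h : OccursAt τ (std (σ.take m)) i) : OccursAt τ σ i := by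
  have hiL : i + τ.length ≤ m := by
    have := h.1; rw [std_length, List.length_take] at this; omega
  refine ⟨by omega, ?_⟩
  have := h.2
  rwa [std_factor, take_drop_take hiL] at this

lemma avoidsAll_take {P : Set (List ℕ)} {σ : List ℕ} {m' m : ℕ} (hm' : m' ≤ m)
    (hm : m ≤ σ.length) (h : AvoidsAll P (std (σ.take m))) :
    AvoidsAll P (std (σ.take m')) := by
  rintro τ hτ ⟨i, hi⟩
  have hiL : i + τ.length ≤ m' := by
    have := hi.1; rw [std_length, List.length_take] at this; omega
  have hocc : OccursAt τ σ i := occursAt_of_take (le_trans hm' hm) hi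
  exact h τ hτ ⟨i, occursAt_in_take hm (le_trans hiL hm') hocc⟩

lemma finite_perm (n : ℕ) (Q : List ℕ → Prop) :
    {σ : List ℕ | σ.length = n ∧ IsPermList σ ∧ Q σ}.Finite := by
  apply Set.Finite.subset ((List.range n).permutations.toFinset.finite_toSet)
  rintro σ ⟨h1, h2, -⟩
  simp only [Finset.coe_sort_coe, Finset.mem_coe, List.mem_toFinset, List.mem_permutations]
  rw [← h1]; exact h2

lemma ncard_biUnion_le (s : Finset ℕ) (f : ℕ → Set (List ℕ)) :
    (⋃ i ∈ s, f i).ncard ≤ ∑ i ∈ s, (f i).ncard := by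
  classical
  induction s using Finset.induction with
  | empty => simp
  | @insert a s h ih =>
    rw [Finset.set_biUnion_insert, Finset.sum_insert h]
    exact le_trans (Set.ncard_union_le _ _) (by omega)

lemma key_count (P : Set (List ℕ))
    (hlen : ∀ τ ∈ P, 4 ≤ τ.length)
    (hone : ∀ l : ℕ, 4 ≤ l → ∃! τ : List ℕ, τ ∈ P ∧ τ.length = l)
    (n : ℕ) (hn : 1 ≤ n) :
    n * avoidCount P (n-1) ≤ avoidCount P n +
      ∑ l ∈ Finset.Icc 4 n, n.choose l * avoidCount P (n-l) := by
  classical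
  set E : Set (List ℕ) :=
    {σ | σ.length = n ∧ IsPermList σ ∧ AvoidsAll P (std (σ.take (n-1)))} with hE
  set A : Set (List ℕ) := {σ | σ.length = n ∧ IsPermList σ ∧ AvoidsAll P σ} with hA
  set B : ℕ → Set (List ℕ) := fun l =>
    {σ | σ.length = n ∧ IsPermList σ ∧ (AvoidsAll P (std (σ.take (n-1))) ∧
      ∃ τ ∈ P, τ.length = l ∧ OccursAt τ σ (n - l))} with hB
  have hEfin : E.Finite := finite_perm n _
  have hAfin : A.Finite := finite_perm n _
  have hBfin : ∀ l, (B l).Finite := fun l => finite_perm n _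
  -- Step 1 : n * a_{n-1} ≤ |E|
  have step1 : n * avoidCount P (n-1) ≤ E.ncard := by
    haveI : Finite ↥E := hEfin.to_subtype
    set bump : ℕ → ℕ → ℕ := fun r v => if v < r then v else v + 1 with hbump
    have bump_mono : ∀ r, StrictMono (bump r) := by
      intro r x y hxy
      simp only [hbump]
      split <;> split <;> omega
    have hmem : ∀ (r : Fin n) (π : List ℕ), π.length = n-1 → IsPermList π →
        AvoidsAll P π → (π.map (bump r) ++ [(r:ℕ)]) ∈ E := by
      intro r π hl hperm hav
      have hlt : ∀ x ∈ π, x < n - 1 := fun x hx => hl ▸ hperm.mem_lt hx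
      have hcodom : ∀ y ∈ π.map (bump r), y < n := by
        intro y hy
        rcases List.mem_map.1 hy with ⟨a, ha, rfl⟩
        have := hlt a ha
        simp only [hbump]; split <;> omega
      have hr : (r : ℕ) ∉ π.map (bump r) := by
        intro hy
        rcases List.mem_map.1 hy with ⟨a, ha, hae⟩
        simp only [hbump] at hae; revert hae; split <;> omega
      have hlen' : (π.map (bump r) ++ [(r:ℕ)]).length = n := by
        simp [hl]; omega
      have hnodup : (π.map (bump r) ++ [(r:ℕ)]).Nodup := by
        rw [List.nodup_append]
        refine ⟨hperm.nodup.map ((bump_mono r).injective), List.nodup_singleton _, ?_⟩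
        intro a ha b hb hab; simp only [List.mem_singleton] at hb; subst hb; subst hab; exact hr ha
      have hpl : IsPermList (π.map (bump r) ++ [(r:ℕ)]) := by
        apply isPermList_of_nodup_lt hnodup
        intro x hx
        rw [hlen']
        rcases List.mem_append.1 hx with h | h
        · exact hcodom x h
        · simp only [List.mem_singleton] at h; subst h; exact r.2
      refine ⟨hlen', hpl, ?_⟩
      have htake : (π.map (bump r) ++ [(r:ℕ)]).take (n-1) = π.map (bump r) :=
        List.take_left' (by simp [hl])
      rw [htake, std_map _ _ (fun x _ y _ h => bump_mono r h), std_of_isPermList hperm]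
      exact hav
    have hcard : Nat.card (Fin n ×
        {σ : List ℕ // σ.length = n-1 ∧ IsPermList σ ∧ AvoidsAll P σ})
        = n * avoidCount P (n-1) := by
      rw [Nat.card_prod, Nat.card_eq_fintype_card, Fintype.card_fin]; rfl
    rw [← Nat.card_coe_set_eq, ← hcard]
    refine Nat.card_le_card_of_injective (fun x =>
      (⟨x.2.1.map (bump x.1) ++ [(x.1 : ℕ)],
        hmem x.1 x.2.1 x.2.2.1 x.2.2.2.1 x.2.2.2.2⟩ : ↥E)) ?_
    rintro ⟨r, π, hπ⟩ ⟨r', π', hπ'⟩ he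
    simp only [Subtype.mk.injEq] at he
    have hlen2 : (π.map (bump r)).length = (π'.map (bump r')).length := by
      simp [hπ.1, hπ'.1]
    obtain ⟨h1, h2⟩ := List.append_inj he hlen2
    have hr2 : (r : ℕ) = (r' : ℕ) := by simpa using h2
    have hrr : r = r' := Fin.ext hr2
    subst hrr
    have hππ : π = π' := List.map_injective_iff.2 (bump_mono r).injective h1
    subst hππ
    rfl
  -- Step 2 : covering
  have cover : E ⊆ A ∪ ⋃ l ∈ Finset.Icc 4 n, B l := by
    rintro σ ⟨hl, hperm, hav⟩
    by_cases hA' : AvoidsAll P σ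
    · exact Or.inl ⟨hl, hperm, hA'⟩
    · right
      simp only [AvoidsAll, not_forall, not_not] at hA'
      obtain ⟨τ, hτP, i, hi⟩ := hA'
      have hL4 : 4 ≤ τ.length := hlen τ hτP
      have hiL : i + τ.length ≤ n := by have := hi.1; omega
      have hnot : ¬ (i + τ.length ≤ n - 1) := by
        intro hle
        exact hav τ hτP ⟨i, occursAt_in_take (by omega) hle hi⟩
      have hin : i + τ.length = n := by omega
      refine Set.mem_iUnion₂.2 ⟨τ.length, Finset.mem_Icc.2 ⟨hL4, by omega⟩, ?_⟩
      refine ⟨hl, hperm, hav, τ, hτP, rfl, ?_⟩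
      have hieq : n - τ.length = i := by omega
      rw [hieq]; exact hi
  -- Step 3
  have step3 : E.ncard ≤ A.ncard + ∑ l ∈ Finset.Icc 4 n, (B l).ncard := by
    have hUfin : (A ∪ ⋃ l ∈ Finset.Icc 4 n, B l).Finite := by
      apply Set.Finite.subset (finite_perm n (fun _ => True))
      rintro σ (⟨h1, h2, -⟩ | hσ)
      · exact ⟨h1, h2, trivial⟩
      · rw [Set.mem_iUnion₂] at hσ
        obtain ⟨l, -, h1, h2, -⟩ := hσ
        exact ⟨h1, h2, trivial⟩
    calc E.ncard ≤ (A ∪ ⋃ l ∈ Finset.Icc 4 n, B l).ncard := Set.ncard_le_ncard cover hUfin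
      _ ≤ A.ncard + (⋃ l ∈ Finset.Icc 4 n, B l).ncard := Set.ncard_union_le _ _
      _ ≤ A.ncard + ∑ l ∈ Finset.Icc 4 n, (B l).ncard :=
          Nat.add_le_add_left (ncard_biUnion_le _ _) _
  -- Step 4
  have step4 : ∀ l ∈ Finset.Icc 4 n, (B l).ncard ≤ n.choose l * avoidCount P (n - l) := by
    intro l hlm
    rw [Finset.mem_Icc] at hlm
    obtain ⟨hl4, hln⟩ := hlm
    haveI : Finite ↥(B l) := (hBfin l).to_subtype
    haveI : Finite {σ : List ℕ // σ.length = n - l ∧ IsPermList σ ∧ AvoidsAll P σ} :=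
      (finite_perm (n-l) (AvoidsAll P)).to_subtype
    have hcard2 : Nat.card (↥((Finset.range n).powersetCard l) ×
        {σ : List ℕ // σ.length = n - l ∧ IsPermList σ ∧ AvoidsAll P σ})
        = n.choose l * avoidCount P (n - l) := by
      rw [Nat.card_prod]
      congr 1
      rw [Nat.card_eq_fintype_card, Fintype.card_coe, Finset.card_powersetCard,
        Finset.card_range]
    rw [← Nat.card_coe_set_eq, ← hcard2]
    have hmem2 : ∀ σ, σ ∈ B l → ((σ.drop (n-l)).toFinset ∈ (Finset.range n).powersetCard l) ∧
        ((std (σ.take (n-l))).length = n - l ∧ IsPermList (std (σ.take (n-l))) ∧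
          AvoidsAll P (std (σ.take (n-l)))) := by
      rintro σ ⟨hlσ, hperm, hav, τ, hτP, hτl, hocc⟩
      have hnd : σ.Nodup := hperm.nodup
      have hvnd : (σ.drop (n-l)).Nodup := List.Nodup.sublist (List.drop_sublist _ _) hnd
      have hvlen : (σ.drop (n-l)).length = l := by rw [List.length_drop, hlσ]; omega
      constructor
      · rw [Finset.mem_powersetCard]
        constructor
        · intro x hx
          rw [List.mem_toFinset] at hx
          exact Finset.mem_range.2 (hlσ ▸ hperm.mem_lt (List.mem_of_mem_drop hx))
        · rw [List.toFinset_card_of_nodup hvnd, hvlen]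
      · refine ⟨?_, std_isPermList (List.Nodup.sublist (List.take_sublist _ _) hnd), ?_⟩
        · rw [std_length, List.length_take, hlσ]; omega
        · exact avoidsAll_take (by omega) (by omega) hav
    refine Nat.card_le_card_of_injective (fun x =>
      (⟨(x.1.drop (n-l)).toFinset, (hmem2 x.1 x.2).1⟩,
       ⟨std (x.1.take (n-l)), (hmem2 x.1 x.2).2⟩)) ?_
    rintro ⟨σ, hσ⟩ ⟨σ', hσ'⟩ he
    simp only [Prod.mk.injEq, Subtype.mk.injEq] at he
    obtain ⟨hfs, hstdu⟩ := he
    obtain ⟨hlσ, hperm, hav, τ, hτP, hτl, hocc⟩ := hσ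
    obtain ⟨hlσ', hperm', hav', τ', hτP', hτl', hocc'⟩ := hσ'
    have hτeq : τ = τ' := by
      obtain ⟨τ₀, -, huq⟩ := hone l hl4
      rw [huq τ ⟨hτP, hτl⟩, huq τ' ⟨hτP', hτl'⟩]
    have hvlen : (σ.drop (n-l)).length = l := by rw [List.length_drop, hlσ]; omega
    have hvlen' : (σ'.drop (n-l)).length = l := by rw [List.length_drop, hlσ']; omega
    have hstdv : std (σ.drop (n-l)) = τ := by
      have h0 := hocc.2
      rwa [hτl, List.take_of_length_le (le_of_eq hvlen)] at h0
    have hstdv' : std (σ'.drop (n-l)) = τ' := by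
      have h0 := hocc'.2
      rwa [hτl', List.take_of_length_le (le_of_eq hvlen')] at h0
    have hvnd : (σ.drop (n-l)).Nodup := List.Nodup.sublist (List.drop_sublist _ _) hperm.nodup
    have hvnd' : (σ'.drop (n-l)).Nodup :=
      List.Nodup.sublist (List.drop_sublist _ _) hperm'.nodup
    have hvperm : (σ.drop (n-l)).Perm (σ'.drop (n-l)) :=
      List.perm_of_nodup_nodup_toFinset_eq hvnd hvnd' hfs
    have hveq : σ.drop (n-l) = σ'.drop (n-l) :=
      eq_of_std_eq_of_perm hvperm (by rw [hstdv, hstdv', hτeq])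
    have hperm2 : (σ.take (n-l)).Perm (σ'.take (n-l)) := by
      have h1 : σ.Perm σ' := by
        apply hperm.trans
        rw [hlσ, ← hlσ']
        exact hperm'.symm
      have h2 : ((σ.take (n-l)) ++ σ.drop (n-l)).Perm
          ((σ'.take (n-l)) ++ σ.drop (n-l)) := by
        rw [List.take_append_drop]
        conv_rhs => rw [hveq, List.take_append_drop]
        exact h1
      exact (List.perm_append_right_iff _).1 h2
    have hueq : σ.take (n-l) = σ'.take (n-l) := eq_of_std_eq_of_perm hperm2 hstdu
    have hfinal : σ = σ' := by
      rw [← List.take_append_drop (n-l) σ, ← List.take_append_drop (n-l) σ', hueq, hveq]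
    exact Subtype.ext hfinal
  -- combine
  have stepA : A.ncard = avoidCount P n := (Nat.card_coe_set_eq A).symm
  calc n * avoidCount P (n-1) ≤ E.ncard := step1
    _ ≤ A.ncard + ∑ l ∈ Finset.Icc 4 n, (B l).ncard := step3
    _ ≤ avoidCount P n + ∑ l ∈ Finset.Icc 4 n, n.choose l * avoidCount P (n-l) := by
        rw [stepA]
        exact Nat.add_le_add_left (Finset.sum_le_sum step4) _

lemma avoidCount_zero (P : Set (List ℕ)) (hlen : ∀ τ ∈ P, 4 ≤ τ.length) :
    avoidCount P 0 = 1 := by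
  have hava : AvoidsAll P [] := by
    rintro τ hτ ⟨i, hi⟩
    have h1 := hi.1
    have h2 := hlen τ hτ
    simp only [List.length_nil] at h1
    omega
  haveI : Nonempty {σ : List ℕ // σ.length = 0 ∧ IsPermList σ ∧ AvoidsAll P σ} :=
    ⟨⟨[], rfl, by simp [IsPermList], hava⟩⟩
  haveI : Subsingleton {σ : List ℕ // σ.length = 0 ∧ IsPermList σ ∧ AvoidsAll P σ} := by
    constructor
    rintro ⟨σ, h0, -⟩ ⟨σ', h0', -⟩
    apply Subtype.ext
    show σ = σ'
    rw [List.length_eq_zero_iff.1 h0, List.length_eq_zero_iff.1 h0']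
  exact Nat.card_unique

lemma sum_pow_div_factorial_le (α : ℝ) (hα : 0 < α)
    (hroot : Real.exp α - 2*α - α^2/2 - α^3/6 = 0) (n : ℕ) :
    ∑ l ∈ Finset.Icc 4 n, α^l / l.factorial ≤ α - 1 := by
  have hexp4 : ∑ i ∈ Finset.range 4, α^i / (i.factorial : ℝ) ≤ Real.exp α :=
    Real.sum_le_exp_of_nonneg hα.le 4
  have hr4 : ∑ i ∈ Finset.range 4, α^i / (i.factorial : ℝ) = 1 + α + α^2/2 + α^3/6 := by
    norm_num [Finset.sum_range_succ, Nat.factorial]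
  have hα1 : (1:ℝ) ≤ α := by rw [hr4] at hexp4; linarith
  by_cases hn4 : 4 ≤ n
  · have hsplit :
        ∑ i ∈ Finset.Ico 0 4, (α^i / (i.factorial:ℝ)) +
          ∑ i ∈ Finset.Ico 4 (n+1), (α^i/(i.factorial:ℝ))
          = ∑ i ∈ Finset.Ico 0 (n+1), (α^i/(i.factorial:ℝ)) :=
      Finset.sum_Ico_consecutive _ (by omega) (by omega)
    rw [← Finset.range_eq_Ico, ← Finset.range_eq_Ico] at hsplit
    have hle := Real.sum_le_exp_of_nonneg hα.le (n+1)
    rw [← Finset.Ico_add_one_right_eq_Icc]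
    linarith
  · have hemp : Finset.Icc 4 n = ∅ := by
      apply Finset.Icc_eq_empty; omega
    rw [hemp]
    simp
    linarith

theorem statement3' (P : Set (List ℕ))
    (hlen : ∀ τ ∈ P, 4 ≤ τ.length)
    (hone : ∀ l : ℕ, 4 ≤ l → ∃! τ : List ℕ, τ ∈ P ∧ τ.length = l)
    (α : ℝ) (hα : 0 < α)
    (hroot : Real.exp α - 2 * α - α ^ 2 / 2 - α ^ 3 / 6 = 0) :
    ∀ n : ℕ, (n.factorial : ℝ) / α ^ n ≤ (avoidCount P n : ℝ) ∧ 1 ≤ avoidCount P n := by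
  set a : ℕ → ℝ := fun k => (avoidCount P k : ℝ) with ha
  have ha0 : ∀ k, 0 ≤ a k := fun k => Nat.cast_nonneg _
  have hA0 : avoidCount P 0 = 1 := avoidCount_zero P hlen
  have hkey : ∀ n : ℕ, 1 ≤ n → (n : ℝ) * a (n-1) ≤ a n +
      ∑ l ∈ Finset.Icc 4 n, (n.choose l : ℝ) * a (n-l) := by
    intro n hn
    have h1 := key_count P hlen hone n hn
    have h2 := (Nat.cast_le (α := ℝ)).2 h1
    push_cast at h2
    exact h2
  have hS : ∀ n : ℕ, 1 ≤ n → (n : ℝ) * a (n-1) ≤ α * a n := by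
    intro n
    induction n using Nat.strong_induction_on with
    | _ n IH =>
      intro hn
      have chain : ∀ l, 1 ≤ l → l ≤ n →
          (((n-1).descFactorial (l-1) : ℕ) : ℝ) * a (n-l) ≤ α^(l-1) * a (n-1) := by
        intro l
        induction l with
        | zero => intro h1 _; exact absurd h1 (by omega)
        | succ l ihl =>
          intro _ h2
          by_cases hl0 : l = 0
          · subst hl0; simp
          · have hl1 : 1 ≤ l := Nat.one_le_iff_ne_zero.2 hl0
            have hln : l ≤ n := by omega
            have hchain := ihl hl1 hln
            have hSk := IH (n - l) (by omega) (by omega)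
            have hdesc : (((n-1).descFactorial l : ℕ) : ℝ)
                = ((n - l : ℕ) : ℝ) * (((n-1).descFactorial (l-1) : ℕ) : ℝ) := by
              have hd : (n-1).descFactorial l = (n - l) * (n-1).descFactorial (l-1) := by
                conv_lhs => rw [show l = (l-1)+1 by omega]
                rw [Nat.descFactorial_succ]
                congr 1
                omega
              rw [hd]; push_cast; ring
            have hidx : n - (l+1) = (n - l) - 1 := by omega
            calc (((n-1).descFactorial ((l+1)-1) : ℕ) : ℝ) * a (n - (l+1))
                = (((n-1).descFactorial (l-1) : ℕ) : ℝ) *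
                    (((n - l : ℕ) : ℝ) * a ((n-l) - 1)) := by
                  rw [show (l+1)-1 = l from rfl, hdesc, hidx]; ring
              _ ≤ (((n-1).descFactorial (l-1) : ℕ) : ℝ) * (α * a (n-l)) := by
                  exact mul_le_mul_of_nonneg_left hSk (Nat.cast_nonneg _)
              _ = α * ((((n-1).descFactorial (l-1) : ℕ) : ℝ) * a (n-l)) := by ring
              _ ≤ α * (α^(l-1) * a (n-1)) := mul_le_mul_of_nonneg_left hchain hα.le
              _ = α^((l+1)-1) * a (n-1) := by
                  have hp : α^l = α^(l-1) * α := by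
                    rw [← pow_succ]
                    congr 1
                    omega
                  rw [show (l+1)-1 = l from rfl, hp]
                  ring
      have hterm : ∀ l ∈ Finset.Icc 4 n, (n.choose l : ℝ) * a (n-l)
          ≤ (n : ℝ) * (α^(l-1) / l.factorial) * a (n-1) := by
        intro l hl
        rw [Finset.mem_Icc] at hl
        have hd : n.choose l * l.factorial = n * (n-1).descFactorial (l-1) := by
          have h1 : n.descFactorial l = l.factorial * n.choose l :=
            Nat.descFactorial_eq_factorial_mul_choose n l
          have h2 : n.descFactorial l = n * (n-1).descFactorial (l-1) := by
            conv_lhs => rw [show n = (n-1)+1 by omega, show l = (l-1)+1 by omega]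
            rw [Nat.succ_descFactorial_succ]
            congr 1
            omega
          rw [← h2, h1, Nat.mul_comm]
        have hfac : (0:ℝ) < (l.factorial : ℝ) := by
          exact_mod_cast l.factorial_pos
        have hcast : (n.choose l : ℝ)
            = (n : ℝ) * (((n-1).descFactorial (l-1) : ℕ) : ℝ) / (l.factorial : ℝ) := by
          rw [eq_div_iff (ne_of_gt hfac)]
          exact_mod_cast congrArg (Nat.cast (R := ℝ)) hd
        rw [hcast]
        have hch := chain l (by omega) hl.2
        calc (n:ℝ) * (((n-1).descFactorial (l-1) : ℕ) : ℝ) / (l.factorial : ℝ) * a (n-l)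
            = ((n:ℝ) / l.factorial) * ((((n-1).descFactorial (l-1) : ℕ) : ℝ) * a (n-l)) := by
              ring
          _ ≤ ((n:ℝ) / l.factorial) * (α^(l-1) * a (n-1)) := by
              exact mul_le_mul_of_nonneg_left hch (by positivity)
          _ = (n : ℝ) * (α^(l-1)/l.factorial) * a (n-1) := by ring
      have hsum := sum_pow_div_factorial_le α hα hroot n
      have hsumle : ∑ l ∈ Finset.Icc 4 n, (n.choose l : ℝ) * a (n-l)
          ≤ (n:ℝ) * a (n-1) * ((α - 1)/α) := by
        calc ∑ l ∈ Finset.Icc 4 n, (n.choose l : ℝ) * a (n-l)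
            ≤ ∑ l ∈ Finset.Icc 4 n, (n : ℝ) * (α^(l-1) / l.factorial) * a (n-1) :=
              Finset.sum_le_sum hterm
          _ = (n:ℝ) * a (n-1) * ∑ l ∈ Finset.Icc 4 n, α^(l-1) / l.factorial := by
              rw [Finset.mul_sum]
              apply Finset.sum_congr rfl
              intro l _
              ring
          _ ≤ (n:ℝ) * a (n-1) * ((α - 1)/α) := by
              apply mul_le_mul_of_nonneg_left _ (by positivity)
              have heq : ∑ l ∈ Finset.Icc 4 n, α^(l-1) / (l.factorial : ℝ)
                  = (∑ l ∈ Finset.Icc 4 n, α^l / (l.factorial : ℝ)) / α := by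
                rw [Finset.sum_div]
                apply Finset.sum_congr rfl
                intro l hl
                rw [Finset.mem_Icc] at hl
                rw [show l = (l-1)+1 by omega, pow_succ]
                field_simp
                ring
                rw [Nat.add_sub_cancel_left]
              rw [heq]
              gcongr
      have h0 := hkey n hn
      have hid : (n:ℝ) * a (n-1) * ((α - 1)/α) + (n:ℝ) * a (n-1) * (1/α)
          = (n:ℝ) * a (n-1) := by
        field_simp
        ring
      have h3 : (n:ℝ) * a (n-1) * (1/α) ≤ a n := by linarith
      calc (n:ℝ) * a (n-1) = α * ((n:ℝ) * a (n-1) * (1/α)) := by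
            field_simp
        _ ≤ α * a n := mul_le_mul_of_nonneg_left h3 hα.le
  have hmain : ∀ n, (n.factorial : ℝ)/α^n ≤ a n := by
    intro n
    induction n with
    | zero => simp [ha, hA0]
    | succ n ih =>
      have hs := hS (n+1) (by omega)
      have h1 : (((n+1).factorial : ℕ) : ℝ)/α^(n+1)
          = ((n+1:ℕ):ℝ) * ((n.factorial : ℝ)/α^n) / α := by
        rw [Nat.factorial_succ]
        push_cast
        field_simp
        ring
      rw [h1, div_le_iff₀ hα]
      calc ((n+1:ℕ):ℝ) * ((n.factorial : ℝ)/α^n)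
          ≤ ((n+1:ℕ):ℝ) * a n := by
            apply mul_le_mul_of_nonneg_left ih (by positivity)
        _ ≤ α * a (n+1) := by
            have : (n+1) - 1 = n := rfl
            simpa [this] using hs
        _ = a (n+1) * α := mul_comm _ _
  intro n
  refine ⟨hmain n, ?_⟩
  by_contra hcon
  push_neg at hcon
  have h0 : avoidCount P n = 0 := by omega
  have h1 := hmain n
  have h2 : a n = 0 := by simp [ha, h0]
  have h3 : (0:ℝ) < (n.factorial:ℝ)/α^n := by positivity
  rw [h2] at h1
  linarith

end AuxProof

/-- If `P` is an antichain containing exactly one pattern of each length `l ≥ 4`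
and no patterns of other lengths, and `α > 0` satisfies
`e^α - 2α - α²/2 - α³/6 = 0`, then `a^P_n ≥ α^{-n} n!`; in particular `a^P_n ≥ 1`. -/
theorem statement3 (P : Set (List ℕ)) (hP : PatternAntichain P)
    (hlen : ∀ τ ∈ P, 4 ≤ τ.length)
    (hone : ∀ l : ℕ, 4 ≤ l → ∃! τ : List ℕ, τ ∈ P ∧ τ.length = l)
    (α : ℝ) (hα : 0 < α)
    (hroot : Real.exp α - 2 * α - α ^ 2 / 2 - α ^ 3 / 6 = 0) :
    ∀ n : ℕ, (n.factorial : ℝ) / α ^ n ≤ (avoidCount P n : ℝ) ∧ 1 ≤ avoidCount P n :=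
  fun n => statement3' P hlen hone α hα hroot n
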